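/- Let p(z,s) = (4πνs)^{-d/2} exp(-|z|²/(4νs)). There is a constant c(d) such that for any second-order spatial derivative p^{(2)} of p, all z₁, z₂ ∈ ℝ^d and 0 < t₁ ≤ t₂ ≤ 2t₁ with |z₂ - z₁|² ≥ d ν t₁: |p^{(2)}(z₂ - z₁, t₂ - t₁)| ≤ c(d) (ν(t₂ - t₁))^{-1/2} (ν t₁)^{-1/2} p(z₂ - z₁, 4(t₂ - t₁)). -/

import Mathlib

open MeasureTheory Real
open scoped ENNReal

noncomputable def heatKernel (d : ℕ) (ν s : ℝ) : EuclideanSpace ℝ (Fin d) → ℝ :=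
  fun x => (4 * Real.pi * ν * s) ^ (-(d : ℝ) / 2) * Real.exp (-‖x‖ ^ 2 / (4 * ν * s))

noncomputable def pderiv {d : ℕ} (i : Fin d)
    (f : EuclideanSpace ℝ (Fin d) → ℝ) : EuclideanSpace ℝ (Fin d) → ℝ :=
  fun x => fderiv ℝ f x (EuclideanSpace.single i 1)

section Aux

lemma hk_hasFDerivAt (d : ℕ) (ν s : ℝ) (hν : 0 < ν) (hs : 0 < s)
    (x : EuclideanSpace ℝ (Fin d)) :
    HasFDerivAt (heatKernel d ν s)
      ((-(2 * ν * s)⁻¹ * heatKernel d ν s x) • (innerSL ℝ x)) x := by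
  have h1 : HasFDerivAt (fun y : EuclideanSpace ℝ (Fin d) => ‖y‖ ^ 2)
      (2 • innerSL ℝ x) x := (hasStrictFDerivAt_norm_sq x).hasFDerivAt
  have h2 := ((h1.mul_const (-(4 * ν * s)⁻¹)).exp).const_mul
      ((4 * Real.pi * ν * s) ^ (-(d : ℝ) / 2))
  have hne : (4 * ν * s) ≠ 0 := by positivity
  have heq : heatKernel d ν s =
      fun y : EuclideanSpace ℝ (Fin d) =>
        (4 * Real.pi * ν * s) ^ (-(d : ℝ) / 2) *
          Real.exp (‖y‖ ^ 2 * -(4 * ν * s)⁻¹) := by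
    funext y
    unfold heatKernel
    congr 1
    field_simp
  rw [heq]
  refine h2.congr_fderiv ?_
  ext v
  simp only [ContinuousLinearMap.coe_smul', Pi.smul_apply, smul_eq_mul, heatKernel,
    nsmul_eq_mul, Nat.cast_ofNat]
  have hne2 : (2 * ν * s) ≠ 0 := by positivity
  field_simp
  simp only [Pi.mul_apply, Pi.ofNat_apply]
  ring


lemma pderiv_hk (d : ℕ) (ν s : ℝ) (hν : 0 < ν) (hs : 0 < s) (j : Fin d) :
    pderiv j (heatKernel d ν s) =
      fun x => (-(2 * ν * s)⁻¹ * x j) * heatKernel d ν s x := by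
  funext x
  unfold pderiv
  rw [(hk_hasFDerivAt d ν s hν hs x).fderiv]
  simp [EuclideanSpace.inner_single_right]
  ring

lemma pderiv2_hk (d : ℕ) (ν s : ℝ) (hν : 0 < ν) (hs : 0 < s) (i j : Fin d)
    (x : EuclideanSpace ℝ (Fin d)) :
    pderiv i (pderiv j (heatKernel d ν s)) x =
      (((2 * ν * s)⁻¹) ^ 2 * x i * x j
        - (2 * ν * s)⁻¹ * (EuclideanSpace.single i (1:ℝ)) j) * heatKernel d ν s x := by
  rw [pderiv_hk d ν s hν hs j]
  unfold pderiv
  have hproj0 : HasFDerivAt _ ((EuclideanSpace.proj j : EuclideanSpace ℝ (Fin d) →L[ℝ] ℝ)) x :=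
    (EuclideanSpace.proj j : EuclideanSpace ℝ (Fin d) →L[ℝ] ℝ).hasFDerivAt
  have hproj : HasFDerivAt (fun y : EuclideanSpace ℝ (Fin d) => y j)
      ((EuclideanSpace.proj j : EuclideanSpace ℝ (Fin d) →L[ℝ] ℝ)) x := hproj0
  have h : HasFDerivAt (fun y => -(2 * ν * s)⁻¹ * y j * heatKernel d ν s y) _ x :=
    (hproj.const_mul (-(2 * ν * s)⁻¹)).mul (hk_hasFDerivAt d ν s hν hs x)
  rw [h.fderiv]
  simp [EuclideanSpace.inner_single_right]
  split_ifs <;> ring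

lemma exp_neg_le_aux {x : ℝ} (hx : 0 < x) : Real.exp (-x) ≤ 4 / x ^ 2 := by
  have h1 : x / 2 ≤ Real.exp (x / 2) :=
    le_trans (by linarith) (Real.add_one_le_exp _)
  have h2 : x ^ 2 / 4 ≤ Real.exp x := by
    have := mul_le_mul h1 h1 (by positivity) (Real.exp_nonneg _)
    calc x ^ 2 / 4 = (x / 2) * (x / 2) := by ring
    _ ≤ Real.exp (x / 2) * Real.exp (x / 2) := this
    _ = Real.exp x := by rw [← Real.exp_add]; ring_nf
  rw [Real.exp_neg]
  calc (Real.exp x)⁻¹ ≤ (x ^ 2 / 4)⁻¹ := by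
        apply inv_anti₀ (by positivity) h2
  _ = 4 / x ^ 2 := by rw [inv_div]

lemma core_ineq (q T r : ℝ) (hq : 0 < q) (hqT : q ≤ T) (hr : T ≤ r ^ 2) :
    ((2 * q)⁻¹ + ((2 * q)⁻¹) ^ 2 * r ^ 2) * Real.exp (-(3 * r ^ 2) / (16 * q)) ≤
      86 * (q ^ (-(1 : ℝ) / 2) * T ^ (-(1 : ℝ) / 2)) := by
  have hT : 0 < T := lt_of_lt_of_le hq hqT
  have hr2 : 0 < r ^ 2 := lt_of_lt_of_le hT hr
  have hqr : q ≤ r ^ 2 := le_trans hqT hr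
  have hx : 0 < 3 * r ^ 2 / (16 * q) := by positivity
  have hexp : Real.exp (-(3 * r ^ 2) / (16 * q)) ≤ 1024 * q ^ 2 / (9 * (r ^ 2) ^ 2) := by
    have := exp_neg_le_aux hx
    calc Real.exp (-(3 * r ^ 2) / (16 * q)) = Real.exp (-(3 * r ^ 2 / (16 * q))) := by
          rw [neg_div]
    _ ≤ 4 / (3 * r ^ 2 / (16 * q)) ^ 2 := this
    _ = 1024 * q ^ 2 / (9 * (r ^ 2) ^ 2) := by
        field_simp
        ring
  have hA : (0:ℝ) ≤ (2 * q)⁻¹ + ((2 * q)⁻¹) ^ 2 * r ^ 2 := by positivity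
  have h1 : ((2 * q)⁻¹ + ((2 * q)⁻¹) ^ 2 * r ^ 2) * Real.exp (-(3 * r ^ 2) / (16 * q)) ≤
      ((2 * q)⁻¹ + ((2 * q)⁻¹) ^ 2 * r ^ 2) * (1024 * q ^ 2 / (9 * (r ^ 2) ^ 2)) :=
    mul_le_mul_of_nonneg_left hexp hA
  have h2 : ((2 * q)⁻¹ + ((2 * q)⁻¹) ^ 2 * r ^ 2) * (1024 * q ^ 2 / (9 * (r ^ 2) ^ 2)) ≤
      86 / r ^ 2 := by
    have heq : ((2 * q)⁻¹ + ((2 * q)⁻¹) ^ 2 * r ^ 2) * (1024 * q ^ 2 / (9 * (r ^ 2) ^ 2)) =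
        (512 * q + 256 * r ^ 2) / (9 * (r ^ 2) ^ 2) := by
      field_simp
      ring
    rw [heq, div_le_div_iff₀ (by positivity) (by positivity)]
    nlinarith [sq_nonneg r, hr2, hqr]
  have h3 : (86 : ℝ) / r ^ 2 ≤ 86 * (q ^ (-(1 : ℝ) / 2) * T ^ (-(1 : ℝ) / 2)) := by
    have hq12 : q ^ (-(1 : ℝ) / 2) = (Real.sqrt q)⁻¹ := by
      rw [show (-(1:ℝ)/2) = -(1/2) by norm_num, Real.rpow_neg hq.le, ← Real.sqrt_eq_rpow]
    have hT12 : T ^ (-(1 : ℝ) / 2) = (Real.sqrt T)⁻¹ := by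
      rw [show (-(1:ℝ)/2) = -(1/2) by norm_num, Real.rpow_neg hT.le, ← Real.sqrt_eq_rpow]
    rw [hq12, hT12, ← mul_inv, ← Real.sqrt_mul hq.le]
    rw [mul_comm (86:ℝ) _, div_eq_mul_inv, mul_comm (86:ℝ) _]
    apply mul_le_mul_of_nonneg_right _ (by norm_num)
    apply inv_anti₀ (by positivity)
    calc Real.sqrt (q * T) ≤ Real.sqrt (r ^ 2 * r ^ 2) :=
          Real.sqrt_le_sqrt (by nlinarith)
    _ = r ^ 2 := by rw [show r^2*r^2 = (r^2)^2 by ring, Real.sqrt_sq hr2.le]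
  linarith

lemma coord_abs_le {d : ℕ} (x : EuclideanSpace ℝ (Fin d)) (i : Fin d) : |x i| ≤ ‖x‖ := by
  have h := abs_real_inner_le_norm x (EuclideanSpace.single i (1:ℝ))
  simpa [EuclideanSpace.inner_single_right] using h

lemma four_rpow (d : ℕ) : (4:ℝ) ^ (-(d:ℝ)/2) = ((2:ℝ)^d)⁻¹ := by
  have h4 : (4:ℝ) = (2:ℝ) ^ (2:ℝ) := by
    rw [show ((2:ℝ):ℝ) = ((2:ℕ):ℝ) by norm_num, Real.rpow_natCast]; norm_num
  rw [h4, ← Real.rpow_mul (by norm_num)]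
  rw [show (2:ℝ) * (-(d:ℝ)/2) = -(d:ℝ) by ring]
  rw [Real.rpow_neg (by norm_num), Real.rpow_natCast]

lemma hk_ratio (d : ℕ) (ν s : ℝ) (hν : 0 < ν) (hs : 0 < s)
    (x : EuclideanSpace ℝ (Fin d)) :
    heatKernel d ν s x =
      2 ^ d * Real.exp (-(3 * ‖x‖ ^ 2) / (16 * (ν * s))) * heatKernel d ν (4 * s) x := by
  unfold heatKernel
  have hπ := Real.pi_pos
  have h1 : (4 * Real.pi * ν * (4 * s)) = 4 * (4 * Real.pi * ν * s) := by ring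
  rw [h1, Real.mul_rpow (show (0:ℝ) ≤ 4 by norm_num) (show (0:ℝ) ≤ 4*Real.pi*ν*s by positivity), four_rpow]
  have h2 : -‖x‖ ^ 2 / (4 * ν * s) =
      -(3 * ‖x‖ ^ 2) / (16 * (ν * s)) + -‖x‖ ^ 2 / (4 * ν * (4 * s)) := by
    field_simp
    ring
  rw [h2, Real.exp_add]
  have h3 : ((2:ℝ)^d)⁻¹ * 2^d = 1 := inv_mul_cancel₀ (by positivity)
  field_simp

end Aux

/-- off-diagonal bound for second spatial derivatives of the heat kernel on the
region `t₁ ≤ t₂ ≤ 2t₁`, `|z₂-z₁|² ≥ dνt₁`. -/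
theorem stmt17 (d : ℕ) (hd : 1 ≤ d) :
    ∃ c > 0, ∀ (ν : ℝ), 0 < ν → ∀ (i j : Fin d)
      (z₁ z₂ : EuclideanSpace ℝ (Fin d)) (t₁ t₂ : ℝ),
      0 < t₁ → t₁ < t₂ → t₂ ≤ 2 * t₁ →
      (d : ℝ) * ν * t₁ ≤ ‖z₂ - z₁‖ ^ 2 →
      |pderiv i (pderiv j (heatKernel d ν (t₂ - t₁))) (z₂ - z₁)| ≤
        c * (ν * (t₂ - t₁)) ^ (-(1 : ℝ) / 2) * (ν * t₁) ^ (-(1 : ℝ) / 2) *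
          heatKernel d ν (4 * (t₂ - t₁)) (z₂ - z₁) := by
  refine ⟨(2:ℝ) ^ d * 86, by positivity, ?_⟩
  intro ν hν i j z₁ z₂ t₁ t₂ ht₁ h12 h2le hfar
  have hπ := Real.pi_pos
  set x := z₂ - z₁ with hxdef
  set s := t₂ - t₁ with hsdef
  have hs : 0 < s := by rw [hsdef]; linarith
  have hst : s ≤ t₁ := by rw [hsdef]; linarith
  set q := ν * s with hqdef
  set T := ν * t₁ with hTdef
  have hq : 0 < q := by positivity
  have hqT : q ≤ T := mul_le_mul_of_nonneg_left hst hν.le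
  have hd1 : (1:ℝ) ≤ (d:ℝ) := by exact_mod_cast hd
  have hTr : T ≤ ‖x‖ ^ 2 := by
    have h0 : 0 < ν * t₁ := by positivity
    nlinarith [hfar]
  have hkpos : 0 < heatKernel d ν s x := by
    unfold heatKernel
    positivity
  have hk4pos : 0 < heatKernel d ν (4 * s) x := by
    unfold heatKernel
    positivity
  have h2q : (2 * ν * s)⁻¹ = (2 * q)⁻¹ := by rw [hqdef, mul_assoc]
  have habs : |pderiv i (pderiv j (heatKernel d ν s)) x| ≤
      ((2 * q)⁻¹ + ((2 * q)⁻¹) ^ 2 * ‖x‖ ^ 2) * heatKernel d ν s x := by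
    rw [pderiv2_hk d ν s hν hs i j x, abs_mul, abs_of_pos hkpos]
    apply mul_le_mul_of_nonneg_right _ hkpos.le
    have hδ : |(EuclideanSpace.single i (1:ℝ)) j| ≤ 1 := by
      rw [EuclideanSpace.single_apply]
      split_ifs <;> norm_num
    have hxi := coord_abs_le x i
    have hxj := coord_abs_le x j
    have hxi0 := abs_nonneg (x i)
    have hxj0 := abs_nonneg (x j)
    have hc0 : (0:ℝ) ≤ (2 * q)⁻¹ := by positivity
    calc |(2 * ν * s)⁻¹ ^ 2 * x i * x j - (2 * ν * s)⁻¹ * (EuclideanSpace.single i (1:ℝ)) j|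
        ≤ |(2 * ν * s)⁻¹ ^ 2 * x i * x j| + |(2 * ν * s)⁻¹ * (EuclideanSpace.single i (1:ℝ)) j| := by
          rw [sub_eq_add_neg]
          exact (abs_add_le _ _).trans (by rw [abs_neg])
    _ = ((2 * q)⁻¹) ^ 2 * (|x i| * |x j|) + (2 * q)⁻¹ * |(EuclideanSpace.single i (1:ℝ)) j| := by
          rw [abs_mul, abs_mul, abs_mul, h2q, abs_pow, abs_of_nonneg hc0]
          ring
    _ ≤ ((2 * q)⁻¹) ^ 2 * (‖x‖ * ‖x‖) + (2 * q)⁻¹ * 1 := by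
          gcongr
    _ = (2 * q)⁻¹ + ((2 * q)⁻¹) ^ 2 * ‖x‖ ^ 2 := by ring
  calc |pderiv i (pderiv j (heatKernel d ν s)) x|
      ≤ ((2 * q)⁻¹ + ((2 * q)⁻¹) ^ 2 * ‖x‖ ^ 2) * heatKernel d ν s x := habs
  _ = (((2 * q)⁻¹ + ((2 * q)⁻¹) ^ 2 * ‖x‖ ^ 2) * Real.exp (-(3 * ‖x‖ ^ 2) / (16 * q))) *
        (2 ^ d * heatKernel d ν (4 * s) x) := by
        rw [hk_ratio d ν s hν hs x, hqdef]
        ring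
  _ ≤ (86 * (q ^ (-(1:ℝ)/2) * T ^ (-(1:ℝ)/2))) * (2 ^ d * heatKernel d ν (4 * s) x) := by
        apply mul_le_mul_of_nonneg_right (core_ineq q T ‖x‖ hq hqT hTr) (by positivity)
  _ = 2 ^ d * 86 * q ^ (-(1:ℝ)/2) * T ^ (-(1:ℝ)/2) * heatKernel d ν (4 * s) x := by ring
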